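/- Every compact subset X of ℝ (with the usual metric) satisfies M(X) = D(X)/2, where M(X) is the supremum of ∑_{i,j} α_i α_j |x_i - x_j| over all finitely supported signed measures of total mass 1 on X (i.e., over all finite tuples x_i ∈ X and reals α_i with ∑ α_i = 1), and D(X) is the diameter of X. -/

import Mathlib

open MeasureTheory intervalIntegral Finset

lemma indicator_eq (xi xj : ℝ) :
    (fun t => |(if xi ≤ t then (1:ℝ) else 0) - (if xj ≤ t then (1:ℝ) else 0)|) =
      Set.indicator (Set.Ico (min xi xj) (max xi xj)) (fun _ => (1:ℝ)) := by
  funext t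
  simp only [Set.indicator, Set.mem_Ico, min_le_iff, lt_max_iff]
  split_ifs <;> simp_all <;> norm_num <;>
    first
      | linarith
      | (rename_i hd; rcases hd with h | h <;> linarith)

lemma integral_eq (xi xj m M : ℝ) (hmi : m ≤ xi) (hiM : xi ≤ M) (hmj : m ≤ xj) (hjM : xj ≤ M) :
    ∫ t in m..M, |(if xi ≤ t then (1:ℝ) else 0) - (if xj ≤ t then (1:ℝ) else 0)|
      = |xi - xj| := by
  have hmM : m ≤ M := le_trans hmi hiM
  have key : ∫ t in m..M,
      Set.indicator (Set.Ico (min xi xj) (max xi xj)) (fun _ => (1:ℝ)) t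
      = max xi xj - min xi xj := by
    rw [intervalIntegral.integral_of_le hmM, MeasureTheory.integral_indicator measurableSet_Ico,
      MeasureTheory.setIntegral_const, measureReal_def, Measure.restrict_apply measurableSet_Ico]
    have hvol : volume (Set.Ico (min xi xj) (max xi xj) ∩ Set.Ioc m M)
        = ENNReal.ofReal (max xi xj - min xi xj) := by
      apply le_antisymm
      · calc volume (Set.Ico (min xi xj) (max xi xj) ∩ Set.Ioc m M)
            ≤ volume (Set.Ico (min xi xj) (max xi xj)) := measure_mono Set.inter_subset_left
          _ = ENNReal.ofReal (max xi xj - min xi xj) := Real.volume_Ico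
      · calc ENNReal.ofReal (max xi xj - min xi xj)
            = volume (Set.Ioo (min xi xj) (max xi xj)) := Real.volume_Ioo.symm
          _ ≤ _ := by
            apply measure_mono
            intro t ht
            have hmin : m ≤ min xi xj := le_min hmi hmj
            exact ⟨⟨le_of_lt ht.1, ht.2⟩,
              ⟨lt_of_le_of_lt hmin ht.1, le_trans (le_of_lt ht.2) (max_le hiM hjM)⟩⟩
    rw [hvol, ENNReal.toReal_ofReal (by simp [min_le_max]), smul_eq_mul, mul_one]
  calc (∫ t in m..M, |(if xi ≤ t then (1:ℝ) else 0) - (if xj ≤ t then (1:ℝ) else 0)|)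
      = ∫ t in m..M, Set.indicator (Set.Ico (min xi xj) (max xi xj)) (fun _ => (1:ℝ)) t := by
        rw [← indicator_eq xi xj]
    _ = max xi xj - min xi xj := key
    _ = |xi - xj| := by rcases le_total xi xj with h | h <;>
        simp [max_def, min_def, h, abs_of_nonneg, abs_of_nonpos, abs_sub_comm] <;>
        rw [abs_of_nonpos (by linarith)] <;> ring

lemma key_bound (k : ℕ) (x a : Fin k → ℝ) (m M : ℝ)
    (hm : ∀ i, m ≤ x i) (hM : ∀ i, x i ≤ M) (hmM : m ≤ M)
    (ha : ∑ i, a i = 1) :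
    ∑ i, ∑ j, a i * a j * |x i - x j| ≤ (M - m) / 2 := by
  set g : Fin k → ℝ → ℝ := fun i t => if x i ≤ t then (1:ℝ) else 0 with hg
  -- integrability of each |g i - g j|
  have hint : ∀ i j, IntervalIntegrable (fun t => |g i t - g j t|) volume m M := by
    intro i j
    have : (fun t => |g i t - g j t|) =
        Set.indicator (Set.Ico (min (x i) (x j)) (max (x i) (x j))) (fun _ => (1:ℝ)) :=
      indicator_eq (x i) (x j)
    rw [this]
    apply MeasureTheory.Integrable.intervalIntegrable
    rw [MeasureTheory.integrable_indicator_iff measurableSet_Ico]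
    exact integrableOn_const measure_Ico_lt_top.ne
  have hint2 : ∀ i j, IntervalIntegrable
      (fun t => a i * a j * |g i t - g j t|) volume m M := fun i j => (hint i j).const_mul _
  have hintrow : ∀ i, IntervalIntegrable
      (fun t => ∑ j, a i * a j * |g i t - g j t|) volume m M := by
    intro i
    have h := IntervalIntegrable.sum (μ := volume) (a := m) (b := M) Finset.univ
      (f := fun j t => a i * a j * |g i t - g j t|) (fun j _ => hint2 i j)
    rwa [Finset.sum_fn] at h
  have hintF : IntervalIntegrable
      (fun t => ∑ i, ∑ j, a i * a j * |g i t - g j t|) volume m M := by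
    have h := IntervalIntegrable.sum (μ := volume) (a := m) (b := M) Finset.univ
      (f := fun i t => ∑ j, a i * a j * |g i t - g j t|) (fun i _ => hintrow i)
    rwa [Finset.sum_fn] at h
  -- S = ∫ F
  have hS : ∑ i, ∑ j, a i * a j * |x i - x j|
      = ∫ t in m..M, ∑ i, ∑ j, a i * a j * |g i t - g j t| := by
    rw [intervalIntegral.integral_finset_sum (fun i _ => hintrow i)]
    apply Finset.sum_congr rfl
    intro i _
    rw [intervalIntegral.integral_finset_sum (fun j _ => hint2 i j)]
    apply Finset.sum_congr rfl
    intro j _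
    rw [intervalIntegral.integral_const_mul]
    congr 1
    exact (integral_eq (x i) (x j) m M (hm i) (hM i) (hm j) (hM j)).symm
  -- pointwise bound
  have hpt : ∀ t ∈ Set.Icc m M, ∑ i, ∑ j, a i * a j * |g i t - g j t| ≤ 1/2 := by
    intro t _
    set σ := ∑ i, a i * g i t with hσ
    have habs : ∀ i j, |g i t - g j t| = g i t + g j t - 2 * (g i t * g j t) := by
      intro i j
      simp only [hg]
      split_ifs <;> norm_num
    have hrow : ∀ i, ∑ j, a i * a j * |g i t - g j t|
        = a i * g i t + a i * σ - 2 * (a i * g i t) * σ := by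
      intro i
      calc ∑ j, a i * a j * |g i t - g j t|
          = ∑ j, (a i * g i t * a j + a i * (a j * g j t)
              - 2 * (a i * g i t) * (a j * g j t)) := by
            apply Finset.sum_congr rfl
            intro j _
            rw [habs i j]; ring
        _ = a i * g i t * (∑ j, a j) + a i * σ - 2 * (a i * g i t) * σ := by
            rw [Finset.sum_sub_distrib, Finset.sum_add_distrib, ← Finset.mul_sum,
              ← Finset.mul_sum, ← Finset.mul_sum, hσ]
        _ = a i * g i t + a i * σ - 2 * (a i * g i t) * σ := by rw [ha]; ring
    have htot : ∑ i, ∑ j, a i * a j * |g i t - g j t| = 2 * σ - 2 * σ ^ 2 := by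
      calc ∑ i, ∑ j, a i * a j * |g i t - g j t|
          = ∑ i, (a i * g i t * (1 + (-2) * σ) + a i * σ) := by
            refine Finset.sum_congr rfl (fun i _ => ?_)
            rw [hrow i]; ring
        _ = (∑ i, a i * g i t) * (1 + (-2) * σ) + (∑ i, a i) * σ := by
            rw [Finset.sum_add_distrib, ← Finset.sum_mul, ← Finset.sum_mul]
        _ = 2 * σ - 2 * σ ^ 2 := by rw [ha, ← hσ]; ring
    rw [htot]
    nlinarith [sq_nonneg (σ - 1/2)]
  calc ∑ i, ∑ j, a i * a j * |x i - x j|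
      = ∫ t in m..M, ∑ i, ∑ j, a i * a j * |g i t - g j t| := hS
    _ ≤ ∫ t in m..M, (1/2 : ℝ) := by
        apply intervalIntegral.integral_mono_on hmM hintF intervalIntegrable_const hpt
    _ = (M - m) / 2 := by rw [intervalIntegral.integral_const, smul_eq_mul]; ring

theorem stmt_10 (X : Set ℝ) (hX : IsCompact X) (hne : X.Nonempty) :
    sSup {r : ℝ | ∃ (k : ℕ) (x : Fin k → ℝ) (α : Fin k → ℝ),
        (∀ i, x i ∈ X) ∧ ∑ i, α i = 1 ∧
          r = ∑ i, ∑ j, α i * α j * |x i - x j|} =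
      Metric.diam X / 2 := by
  set m := sInf X with hm
  set M := sSup X with hM
  have hmem_m : m ∈ X := hX.sInf_mem hne
  have hmem_M : M ∈ X := hX.sSup_mem hne
  have hbdd : Bornology.IsBounded X := hX.isBounded
  have hlow : ∀ y ∈ X, m ≤ y := fun y hy => csInf_le hX.bddBelow hy
  have hhigh : ∀ y ∈ X, y ≤ M := fun y hy => le_csSup hX.bddAbove hy
  have hmM : m ≤ M := hhigh m hmem_m
  have hdiam : Metric.diam X = M - m := by
    apply le_antisymm
    · calc Metric.diam X ≤ Metric.diam (Set.Icc m M) :=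
          Metric.diam_mono (fun y hy => ⟨hlow y hy, hhigh y hy⟩) (Metric.isBounded_Icc m M)
        _ = M - m := by rw [Real.diam_Icc hmM]
    · calc M - m = dist M m := by rw [Real.dist_eq, abs_of_nonneg (by linarith)]
        _ ≤ Metric.diam X := Metric.dist_le_diam_of_mem hbdd hmem_M hmem_m
  have hmemset : (M - m) / 2 ∈ {r : ℝ | ∃ (k : ℕ) (x : Fin k → ℝ) (α : Fin k → ℝ),
      (∀ i, x i ∈ X) ∧ ∑ i, α i = 1 ∧
        r = ∑ i, ∑ j, α i * α j * |x i - x j|} := by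
    refine ⟨2, ![m, M], ![1/2, 1/2], fun i => ?_, by simp [Fin.sum_univ_two]; norm_num, ?_⟩
    · fin_cases i <;> simpa
    · have h1 : |m - M| = M - m := by rw [abs_sub_comm, abs_of_nonneg (by linarith)]
      have h2 : |M - m| = M - m := abs_of_nonneg (by linarith)
      simp [Fin.sum_univ_two, h1, h2]
      ring
  have hub : ∀ r ∈ {r : ℝ | ∃ (k : ℕ) (x : Fin k → ℝ) (α : Fin k → ℝ),
      (∀ i, x i ∈ X) ∧ ∑ i, α i = 1 ∧
        r = ∑ i, ∑ j, α i * α j * |x i - x j|}, r ≤ (M - m) / 2 := by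
    rintro r ⟨k, x, α, hx, hα, rfl⟩
    exact key_bound k x α m M (fun i => hlow _ (hx i)) (fun i => hhigh _ (hx i)) hmM hα
  rw [hdiam]
  exact le_antisymm (csSup_le ⟨_, hmemset⟩ hub) (le_csSup ⟨_, hub⟩ hmemset)
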